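/- Transposed double Khintchine inequality: let 1 < p < ∞ with 1/p + 1/p' = 1 and let b_{p'} be the upper Khintchine constant for p'. Then for every family of real numbers (α(x,z))_{(x,z) ∈ {−1,1}^n × {−1,1}^n}, ( ∑_{i,j=1}^n ( ∑_{x,z} x_i z_j α(x,z) )² )^{1/2} ≤ b_{p'}² · (2^{2n})^{1/p'} · ( ∑_{x,z} |α(x,z)|^p )^{1/p}. -/

import Mathlib

open Finset

lemma tdk_card (n : ℕ) : (Fintype.card (Fin n → ℤˣ)) = 2 ^ n := by
  simp [Fintype.card_fun]

lemma tdk_orth (n : ℕ) (j j' : Fin n) :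
    ∑ z : Fin n → ℤˣ, ((z j : ℤ) : ℝ) * ((z j' : ℤ) : ℝ) =
      if j = j' then (2 : ℝ) ^ n else 0 := by
  split_ifs with h
  · subst h
    have : ∀ z : Fin n → ℤˣ, ((z j : ℤ) : ℝ) * ((z j : ℤ) : ℝ) = 1 := by
      intro z
      have h1 : (z j : ℤ) * (z j : ℤ) = 1 := by
        rw [← Units.val_mul, Int.units_mul_self]; rfl
      exact_mod_cast congrArg (fun t : ℤ => (t : ℝ)) h1
    simp only [this, Finset.sum_const, card_univ, tdk_card, nsmul_eq_mul, mul_one]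
    push_cast
    ring
  · -- pair each z with its flip at j
    set f : (Fin n → ℤˣ) → ℝ := fun z => ((z j : ℤ) : ℝ) * ((z j' : ℤ) : ℝ) with hf
    have hinv : Function.Involutive (fun z : Fin n → ℤˣ => Function.update z j (-(z j))) := by
      intro z
      funext k
      by_cases hk : k = j
      · subst hk; simp [Function.update_self]
      · simp [Function.update_of_ne hk]
    set σ : (Fin n → ℤˣ) ≃ (Fin n → ℤˣ) := hinv.toPerm _ with hσ
    have h1 : ∑ z, f (σ z) = ∑ z, f z := Equiv.sum_comp σ f
    have h2 : ∀ z, f (σ z) = - f z := by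
      intro z
      simp only [hf, hσ, Function.Involutive.coe_toPerm]
      rw [Function.update_self, Function.update_of_ne (Ne.symm h)]
      push_cast
      ring
    have h3 : ∑ z, f z = - ∑ z, f z := by
      conv_lhs => rw [← h1]
      simp [h2]
    linarith [h3]

lemma tdk_real_khintchine {p' b : ℝ} (hp' : 0 < p')
    (hK : ∀ (m : ℕ) (β : Fin m → ℂ),
      ((1 / 2 ^ m) * ∑ w : Fin m → ℤˣ,
          ‖∑ i, β i * (((w i : ℤ) : ℝ) : ℂ)‖ ^ p') ^ (1 / p') ≤
        b * Real.sqrt (∑ i, ‖β i‖ ^ 2))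
    (m : ℕ) (β : Fin m → ℝ) :
    ∑ w : Fin m → ℤˣ, |∑ i, β i * ((w i : ℤ) : ℝ)| ^ p' ≤
      2 ^ m * (b * Real.sqrt (∑ i, β i ^ 2)) ^ p' := by
  have h := hK m (fun i => (β i : ℂ))
  have e1 : ∀ w : Fin m → ℤˣ,
      ‖∑ i, (β i : ℂ) * (((w i : ℤ) : ℝ) : ℂ)‖ = |∑ i, β i * ((w i : ℤ) : ℝ)| := by
    intro w
    have : (∑ i, (β i : ℂ) * (((w i : ℤ) : ℝ) : ℂ)) = ((∑ i, β i * ((w i : ℤ) : ℝ) : ℝ) : ℂ) := by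
      push_cast; ring
    rw [this, Complex.norm_real, Real.norm_eq_abs]
  have e2 : (∑ i, ‖(β i : ℂ)‖ ^ 2) = ∑ i, β i ^ 2 := by
    refine Finset.sum_congr rfl fun i _ => ?_
    simp [Complex.norm_real, Real.norm_eq_abs, sq_abs]
  simp only [e1, e2] at h
  set SB : ℝ := ∑ w : Fin m → ℤˣ, |∑ i, β i * ((w i : ℤ) : ℝ)| ^ p' with hSBdef
  have hSB0 : 0 ≤ SB := Finset.sum_nonneg fun w _ => Real.rpow_nonneg (abs_nonneg _) _
  have hpow := Real.rpow_le_rpow (by positivity) h hp'.le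
  have hcanc : ((1 / 2 ^ m * SB : ℝ) ^ (1 / p')) ^ p' = 1 / 2 ^ m * SB := by
    rw [← Real.rpow_mul (by positivity), one_div_mul_cancel hp'.ne', Real.rpow_one]
  rw [hcanc] at hpow
  have h2m : (0:ℝ) < 2 ^ m := by positivity
  calc SB = 2 ^ m * (1 / 2 ^ m * SB) := by field_simp
    _ ≤ 2 ^ m * (b * Real.sqrt (∑ i, β i ^ 2)) ^ p' := by
        exact mul_le_mul_of_nonneg_left hpow h2m.le

lemma tdk_minkowski {ι κ : Type*} [Fintype κ] (s : Finset ι) (g : ι → κ → ℝ)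
    (hg : ∀ i k, 0 ≤ g i k) {q : ℝ} (hq : 1 ≤ q) :
    (∑ k, (∑ i ∈ s, g i k) ^ q) ^ (1 / q) ≤ ∑ i ∈ s, (∑ k, g i k ^ q) ^ (1 / q) := by
  have hq0 : q ≠ 0 := by positivity
  classical
  induction s using Finset.induction with
  | empty => simp [Real.zero_rpow hq0, Real.zero_rpow (inv_ne_zero hq0)]
  | insert a s hnotmem ih =>
    simp only [Finset.sum_insert hnotmem]
    calc (∑ k, (g a k + ∑ i ∈ s, g i k) ^ q) ^ (1 / q)
        ≤ (∑ k, g a k ^ q) ^ (1 / q) + (∑ k, (∑ i ∈ s, g i k) ^ q) ^ (1 / q) :=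
          Real.Lp_add_le_of_nonneg univ hq (fun k _ => hg a k)
            (fun k _ => Finset.sum_nonneg fun i _ => hg i k)
      _ ≤ (∑ k, g a k ^ q) ^ (1 / q) + ∑ i ∈ s, (∑ k, g i k ^ q) ^ (1 / q) := by
          exact add_le_add le_rfl ih

lemma tdk_sum_swap4 {A B C D : Type*} [Fintype A] [Fintype B] [Fintype C] [Fintype D]
    (g : A → B → C → D → ℝ) :
    ∑ x : A, ∑ z : B, ∑ i : C, ∑ j : D, g x z i j
      = ∑ i : C, ∑ j : D, ∑ x : A, ∑ z : B, g x z i j :=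
  calc ∑ x : A, ∑ z : B, ∑ i : C, ∑ j : D, g x z i j
      = ∑ x : A, ∑ i : C, ∑ z : B, ∑ j : D, g x z i j :=
        Finset.sum_congr rfl fun x _ => Finset.sum_comm
    _ = ∑ i : C, ∑ x : A, ∑ z : B, ∑ j : D, g x z i j := Finset.sum_comm
    _ = ∑ i : C, ∑ x : A, ∑ j : D, ∑ z : B, g x z i j :=
        Finset.sum_congr rfl fun i _ => Finset.sum_congr rfl fun x _ => Finset.sum_comm
    _ = ∑ i : C, ∑ j : D, ∑ x : A, ∑ z : B, g x z i j :=
        Finset.sum_congr rfl fun i _ => Finset.sum_comm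


set_option maxHeartbeats 1600000

/-- Transposed double Khintchine inequality: let `1 < p < ∞` with
`1/p + 1/p' = 1` and let `b` be an upper Khintchine constant for `p'`
(i.e. `(2^{-m} ∑_w |∑ β_i w_i|^{p'})^{1/p'} ≤ b (∑ |β_i|²)^{1/2}` for all `m, β`).
Then for every family of reals `(α(x,z))` indexed by `{−1,1}ⁿ × {−1,1}ⁿ`,
`(∑_{i,j} (∑_{x,z} x_i z_j α(x,z))²)^{1/2}
   ≤ b² (2^{2n})^{1/p'} (∑_{x,z} |α(x,z)|^p)^{1/p}`. -/
theorem transposed_double_khintchine (n : ℕ) (p p' b : ℝ)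
    (hp : 1 < p) (hpp' : 1 / p + 1 / p' = 1) (hb : 1 ≤ b)
    (hKhintchine : ∀ (m : ℕ) (β : Fin m → ℂ),
      ((1 / 2 ^ m) * ∑ w : Fin m → ℤˣ,
          ‖∑ i, β i * (((w i : ℤ) : ℝ) : ℂ)‖ ^ p') ^ (1 / p') ≤
        b * Real.sqrt (∑ i, ‖β i‖ ^ 2))
    (α : (Fin n → ℤˣ) → (Fin n → ℤˣ) → ℝ) :
    Real.sqrt (∑ i, ∑ j,
        (∑ x : Fin n → ℤˣ, ∑ z : Fin n → ℤˣ,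
          ((x i : ℤ) : ℝ) * ((z j : ℤ) : ℝ) * α x z) ^ 2) ≤
      b ^ 2 * ((2 : ℝ) ^ (2 * n)) ^ (1 / p') *
        (∑ x : Fin n → ℤˣ, ∑ z : Fin n → ℤˣ, |α x z| ^ p) ^ (1 / p) := by
  classical
  have hpq : p.HolderConjugate p' := Real.holderConjugate_iff.2 ⟨hp, by rw [← one_div, ← one_div]; exact hpp'⟩
  have hp'1 : 1 < p' := hpq.symm.lt
  have hp'0 : 0 < p' := hpq.symm.pos
  have hb0 : (0:ℝ) < b := lt_of_lt_of_le one_pos hb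
  set S : Fin n → Fin n → ℝ :=
    fun i j => ∑ x : Fin n → ℤˣ, ∑ z : Fin n → ℤˣ,
      ((x i : ℤ) : ℝ) * ((z j : ℤ) : ℝ) * α x z with hS
  set T : ℝ := ∑ i, ∑ j, S i j ^ 2 with hTdef
  have hT0 : 0 ≤ T := Finset.sum_nonneg fun i _ => Finset.sum_nonneg fun j _ => sq_nonneg _
  set c : (Fin n → ℤˣ) → Fin n → ℝ := fun z i => ∑ j, S i j * ((z j : ℤ) : ℝ) with hc
  set G : (Fin n → ℤˣ) → ℝ := fun z => ∑ i, (c z i) ^ 2 with hG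
  have hG0 : ∀ z, 0 ≤ G z := fun z => Finset.sum_nonneg fun i _ => sq_nonneg _
  set F : (Fin n → ℤˣ) → (Fin n → ℤˣ) → ℝ :=
    fun x z => ∑ i, c z i * ((x i : ℤ) : ℝ) with hF
  have hKh := tdk_real_khintchine hp'0 hKhintchine
  -- Step A
  have stepA : ∀ z, ∑ x : Fin n → ℤˣ, |F x z| ^ p' ≤ 2 ^ n * b ^ p' * (G z) ^ (p' / 2) := by
    intro z
    have h := hKh n (fun i => c z i)
    have e : (b * Real.sqrt (∑ i, c z i ^ 2)) ^ p' = b ^ p' * (G z) ^ (p' / 2) := by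
      rw [Real.mul_rpow hb0.le (Real.sqrt_nonneg _), Real.sqrt_eq_rpow,
        ← Real.rpow_mul (hG0 z), show (1:ℝ)/2 * p' = p'/2 by ring]
    rw [e] at h
    calc ∑ x : Fin n → ℤˣ, |F x z| ^ p'
        = ∑ x : Fin n → ℤˣ, |∑ i, c z i * ((x i : ℤ) : ℝ)| ^ p' := rfl
      _ ≤ 2 ^ n * (b ^ p' * (G z) ^ (p' / 2)) := h
      _ = 2 ^ n * b ^ p' * (G z) ^ (p' / 2) := by ring
  -- orthogonality per i
  have horth : ∀ i, ∑ z : Fin n → ℤˣ, (c z i) ^ 2 = 2 ^ n * ∑ j, S i j ^ 2 := by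
    intro i
    have e : ∀ z : Fin n → ℤˣ, (c z i) ^ 2 =
        ∑ j, ∑ k, (S i j * S i k) * (((z j : ℤ) : ℝ) * ((z k : ℤ) : ℝ)) := by
      intro z
      simp only [hc]
      rw [sq, Finset.sum_mul_sum]
      exact Finset.sum_congr rfl fun j _ => Finset.sum_congr rfl fun k _ => by ring
    calc ∑ z : Fin n → ℤˣ, (c z i) ^ 2
        = ∑ z : Fin n → ℤˣ, ∑ j, ∑ k, (S i j * S i k) * (((z j : ℤ) : ℝ) * ((z k : ℤ) : ℝ)) :=
          Finset.sum_congr rfl fun z _ => e z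
      _ = ∑ j, ∑ z : Fin n → ℤˣ, ∑ k, (S i j * S i k) * (((z j : ℤ) : ℝ) * ((z k : ℤ) : ℝ)) :=
          Finset.sum_comm
      _ = ∑ j, ∑ k, ∑ z : Fin n → ℤˣ, (S i j * S i k) * (((z j : ℤ) : ℝ) * ((z k : ℤ) : ℝ)) :=
          Finset.sum_congr rfl fun j _ => Finset.sum_comm
      _ = ∑ j, ∑ k, (S i j * S i k) * ∑ z : Fin n → ℤˣ, ((z j : ℤ) : ℝ) * ((z k : ℤ) : ℝ) :=
          Finset.sum_congr rfl fun j _ => Finset.sum_congr rfl fun k _ =>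
            (Finset.mul_sum _ _ _).symm
      _ = ∑ j, ∑ k, (S i j * S i k) * (if j = k then (2:ℝ) ^ n else 0) :=
          Finset.sum_congr rfl fun j _ => Finset.sum_congr rfl fun k _ => by
            rw [tdk_orth]
      _ = ∑ j, (S i j * S i j) * (2:ℝ) ^ n := by
          refine Finset.sum_congr rfl fun j _ => ?_
          simp [mul_ite, mul_zero]
      _ = 2 ^ n * ∑ j, S i j ^ 2 := by
          rw [Finset.mul_sum]
          exact Finset.sum_congr rfl fun j _ => by ring
  -- Step B
  have hbp'1 : (1:ℝ) ≤ b ^ p' := by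
    calc (1:ℝ) = 1 ^ p' := (Real.one_rpow p').symm
      _ ≤ b ^ p' := Real.rpow_le_rpow zero_le_one hb hp'0.le
  have stepB : ∑ z : Fin n → ℤˣ, (G z) ^ (p' / 2) ≤ 2 ^ n * b ^ p' * T ^ (p' / 2) := by
    rcases le_or_gt 2 p' with hcase | hcase
    · -- p' ≥ 2 : Minkowski + Khintchine per coordinate
      have hq1 : (1:ℝ) ≤ p' / 2 := by linarith
      have hq0 : (0:ℝ) < p' / 2 := by linarith
      have hmink := tdk_minkowski (univ : Finset (Fin n))
        (fun i (z : Fin n → ℤˣ) => (c z i) ^ 2) (fun i z => sq_nonneg _) hq1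
      have e3 : ∀ (i : Fin n) (z : Fin n → ℤˣ), ((c z i) ^ 2 : ℝ) ^ (p' / 2) = |c z i| ^ p' := by
        intro i z
        rw [← sq_abs, ← Real.rpow_natCast |c z i| 2, ← Real.rpow_mul (abs_nonneg _)]
        push_cast
        rw [show (2:ℝ) * (p' / 2) = p' by ring]
      -- bound each coordinate's L^{p'} norm
      have hki : ∀ i : Fin n, (∑ z : Fin n → ℤˣ, ((c z i) ^ 2) ^ (p' / 2)) ^ (1 / (p' / 2)) ≤
          ((2:ℝ) ^ n) ^ (1 / (p' / 2)) * (b ^ 2 * ∑ j, S i j ^ 2) := by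
        intro i
        have h := hKh n (fun j => S i j)
        have hce : ∑ z : Fin n → ℤˣ, ((c z i) ^ 2) ^ (p' / 2) =
            ∑ z : Fin n → ℤˣ, |∑ j, S i j * ((z j : ℤ) : ℝ)| ^ p' :=
          Finset.sum_congr rfl fun z _ => e3 i z
        rw [hce]
        have hR0 : (0:ℝ) ≤ ∑ j, S i j ^ 2 := Finset.sum_nonneg fun j _ => sq_nonneg _
        calc (∑ z : Fin n → ℤˣ, |∑ j, S i j * ((z j : ℤ) : ℝ)| ^ p') ^ (1 / (p' / 2))
            ≤ ((2:ℝ) ^ n * (b * Real.sqrt (∑ j, S i j ^ 2)) ^ p') ^ (1 / (p' / 2)) :=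
              Real.rpow_le_rpow
                (Finset.sum_nonneg fun z _ => Real.rpow_nonneg (abs_nonneg _) _) h
                (by positivity)
          _ = ((2:ℝ) ^ n) ^ (1 / (p' / 2)) * (b ^ 2 * ∑ j, S i j ^ 2) := by
              have key : ((b * Real.sqrt (∑ j, S i j ^ 2)) ^ p') ^ (1 / (p' / 2)) =
                  b ^ 2 * ∑ j, S i j ^ 2 := by
                rw [← Real.rpow_mul (by positivity),
                  show p' * (1 / (p' / 2)) = ((2:ℕ):ℝ) by push_cast; field_simp,
                  Real.rpow_natCast, mul_pow, Real.sq_sqrt hR0]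
              rw [Real.mul_rpow (by positivity) (Real.rpow_nonneg (by positivity) _), key]
      -- combine
      have hfull : (∑ z : Fin n → ℤˣ, (G z) ^ (p' / 2)) ^ (1 / (p' / 2)) ≤
          ((2:ℝ) ^ n) ^ (1 / (p' / 2)) * (b ^ 2 * T) := by
        calc (∑ z : Fin n → ℤˣ, (G z) ^ (p' / 2)) ^ (1 / (p' / 2))
            ≤ ∑ i, (∑ z : Fin n → ℤˣ, ((c z i) ^ 2) ^ (p' / 2)) ^ (1 / (p' / 2)) := hmink
          _ ≤ ∑ i, ((2:ℝ) ^ n) ^ (1 / (p' / 2)) * (b ^ 2 * ∑ j, S i j ^ 2) :=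
              Finset.sum_le_sum fun i _ => hki i
          _ = ((2:ℝ) ^ n) ^ (1 / (p' / 2)) * (b ^ 2 * T) := by
              rw [hTdef, ← Finset.mul_sum, ← Finset.mul_sum]
      have hsum0 : (0:ℝ) ≤ ∑ z : Fin n → ℤˣ, (G z) ^ (p' / 2) :=
        Finset.sum_nonneg fun z _ => Real.rpow_nonneg (hG0 z) _
      have := Real.rpow_le_rpow (Real.rpow_nonneg hsum0 _) hfull hq0.le
      rw [← Real.rpow_mul hsum0, one_div_mul_cancel hq0.ne', Real.rpow_one] at this
      calc ∑ z : Fin n → ℤˣ, (G z) ^ (p' / 2)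
          ≤ (((2:ℝ) ^ n) ^ (1 / (p' / 2)) * (b ^ 2 * T)) ^ (p' / 2) := this
        _ = 2 ^ n * b ^ p' * T ^ (p' / 2) := by
            rw [Real.mul_rpow (Real.rpow_nonneg (by positivity) _) (by positivity),
              ← Real.rpow_mul (by positivity : (0:ℝ) ≤ (2:ℝ) ^ n),
              one_div_mul_cancel hq0.ne', Real.rpow_one,
              Real.mul_rpow (by positivity) hT0,
              ← Real.rpow_natCast b 2, ← Real.rpow_mul hb0.le,
              show ((2:ℕ):ℝ) * (p' / 2) = p' by push_cast; ring, mul_assoc]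
    · -- p' < 2 : concavity + orthogonality
      have ht0 : (0:ℝ) < p' / 2 := by linarith
      have ht1 : p' / 2 < 1 := by linarith
      have hinv1 : (1:ℝ) ≤ (p' / 2)⁻¹ := le_of_lt ((one_lt_inv₀ ht0).2 ht1)
      have hWH := Real.inner_le_weight_mul_Lp_of_nonneg (univ : Finset (Fin n → ℤˣ))
        hinv1 (fun _ => (1:ℝ)) (fun z => (G z) ^ (p' / 2)) (fun _ => zero_le_one)
        (fun z => Real.rpow_nonneg (hG0 z) _)
      simp only [one_mul] at hWH
      have e4 : ∀ z : Fin n → ℤˣ, ((G z) ^ (p' / 2)) ^ ((p' / 2)⁻¹) = G z := by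
        intro z
        rw [← Real.rpow_mul (hG0 z), mul_inv_cancel₀ ht0.ne', Real.rpow_one]
      have hcard : ∑ _z : Fin n → ℤˣ, (1:ℝ) = (2:ℝ) ^ n := by
        simp [card_univ, tdk_card]
      have hGsum : ∑ z : Fin n → ℤˣ, G z = 2 ^ n * T := by
        calc ∑ z : Fin n → ℤˣ, G z = ∑ z : Fin n → ℤˣ, ∑ i, (c z i) ^ 2 := rfl
          _ = ∑ i, ∑ z : Fin n → ℤˣ, (c z i) ^ 2 := Finset.sum_comm
          _ = ∑ i, 2 ^ n * ∑ j, S i j ^ 2 := Finset.sum_congr rfl fun i _ => horth i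
          _ = 2 ^ n * T := by rw [hTdef, ← Finset.mul_sum]
      rw [inv_inv] at hWH
      simp only [e4] at hWH
      rw [hcard, hGsum] at hWH
      calc ∑ z : Fin n → ℤˣ, (G z) ^ (p' / 2)
          ≤ ((2:ℝ) ^ n) ^ (1 - p' / 2) * ((2:ℝ) ^ n * T) ^ (p' / 2) := hWH
        _ = 2 ^ n * T ^ (p' / 2) := by
            rw [Real.mul_rpow (by positivity) hT0, ← mul_assoc,
              ← Real.rpow_add (by positivity : (0:ℝ) < (2:ℝ) ^ n), sub_add_cancel,
              Real.rpow_one]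
        _ ≤ 2 ^ n * b ^ p' * T ^ (p' / 2) := by
            have hTp0 : 0 ≤ T ^ (p' / 2) := Real.rpow_nonneg hT0 _
            have h2n : (0:ℝ) ≤ (2:ℝ) ^ n := by positivity
            nlinarith [mul_le_mul_of_nonneg_right (mul_le_mul_of_nonneg_left hbp'1 h2n) hTp0]
  -- combination
  have hFbound : ∑ x : Fin n → ℤˣ, ∑ z : Fin n → ℤˣ, |F x z| ^ p' ≤
      2 ^ (2 * n) * b ^ (2 * p') * T ^ (p' / 2) := by
    calc ∑ x : Fin n → ℤˣ, ∑ z : Fin n → ℤˣ, |F x z| ^ p'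
        = ∑ z : Fin n → ℤˣ, ∑ x : Fin n → ℤˣ, |F x z| ^ p' := Finset.sum_comm
      _ ≤ ∑ z : Fin n → ℤˣ, 2 ^ n * b ^ p' * (G z) ^ (p' / 2) :=
          Finset.sum_le_sum fun z _ => stepA z
      _ = 2 ^ n * b ^ p' * ∑ z : Fin n → ℤˣ, (G z) ^ (p' / 2) :=
          (Finset.mul_sum _ _ _).symm
      _ ≤ 2 ^ n * b ^ p' * (2 ^ n * b ^ p' * T ^ (p' / 2)) :=
          mul_le_mul_of_nonneg_left stepB (by positivity)
      _ = 2 ^ (2 * n) * b ^ (2 * p') * T ^ (p' / 2) := by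
          rw [show (2:ℝ) * p' = p' + p' by ring, Real.rpow_add hb0, two_mul, pow_add]
          ring
  -- identity
  have hid : T = ∑ x : Fin n → ℤˣ, ∑ z : Fin n → ℤˣ, α x z * F x z := by
    have e : ∀ (x z : Fin n → ℤˣ), α x z * F x z =
        ∑ i, ∑ j, S i j * (((x i : ℤ) : ℝ) * ((z j : ℤ) : ℝ) * α x z) := by
      intro x z
      simp only [hF, hc]
      rw [Finset.mul_sum]
      refine Finset.sum_congr rfl fun i _ => ?_
      rw [Finset.sum_mul, Finset.mul_sum]
      exact Finset.sum_congr rfl fun j _ => by ring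
    calc T = ∑ i, ∑ j, S i j ^ 2 := hTdef
      _ = ∑ i, ∑ j, S i j * S i j := by
          exact Finset.sum_congr rfl fun i _ => Finset.sum_congr rfl fun j _ => sq (S i j) ▸ (sq (S i j)).symm
      _ = ∑ i, ∑ j, S i j * (∑ x : Fin n → ℤˣ, ∑ z : Fin n → ℤˣ,
            ((x i : ℤ) : ℝ) * ((z j : ℤ) : ℝ) * α x z) := rfl
      _ = ∑ i, ∑ j, ∑ x : Fin n → ℤˣ, ∑ z : Fin n → ℤˣ,
            S i j * (((x i : ℤ) : ℝ) * ((z j : ℤ) : ℝ) * α x z) := by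
          refine Finset.sum_congr rfl fun i _ => Finset.sum_congr rfl fun j _ => ?_
          rw [Finset.mul_sum]
          exact Finset.sum_congr rfl fun x _ => (Finset.mul_sum _ _ _)
      _ = ∑ x : Fin n → ℤˣ, ∑ z : Fin n → ℤˣ, ∑ i, ∑ j,
            S i j * (((x i : ℤ) : ℝ) * ((z j : ℤ) : ℝ) * α x z) :=
          (tdk_sum_swap4 _).symm
      _ = ∑ x : Fin n → ℤˣ, ∑ z : Fin n → ℤˣ, α x z * F x z :=
          Finset.sum_congr rfl fun x _ => Finset.sum_congr rfl fun z _ => (e x z).symm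
  -- Hölder
  have hHold : T ≤ (∑ x : Fin n → ℤˣ, ∑ z : Fin n → ℤˣ, |α x z| ^ p) ^ (1 / p) *
      (∑ x : Fin n → ℤˣ, ∑ z : Fin n → ℤˣ, |F x z| ^ p') ^ (1 / p') := by
    have hH := Real.inner_le_Lp_mul_Lq (univ : Finset ((Fin n → ℤˣ) × (Fin n → ℤˣ)))
      (fun q => α q.1 q.2) (fun q => F q.1 q.2) hpq
    simp only [Fintype.sum_prod_type] at hH
    rw [hid]
    exact hH
  -- final assembly
  set Ap : ℝ := (∑ x : Fin n → ℤˣ, ∑ z : Fin n → ℤˣ, |α x z| ^ p) ^ (1 / p) with hAp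
  have hAp0 : 0 ≤ Ap :=
    Real.rpow_nonneg (Finset.sum_nonneg fun x _ => Finset.sum_nonneg fun z _ =>
      Real.rpow_nonneg (abs_nonneg _) _) _
  have hFsum0 : 0 ≤ ∑ x : Fin n → ℤˣ, ∑ z : Fin n → ℤˣ, |F x z| ^ p' :=
    Finset.sum_nonneg fun x _ => Finset.sum_nonneg fun z _ =>
      Real.rpow_nonneg (abs_nonneg _) _
  have hFp' : (∑ x : Fin n → ℤˣ, ∑ z : Fin n → ℤˣ, |F x z| ^ p') ^ (1 / p') ≤
      ((2:ℝ) ^ (2 * n)) ^ (1 / p') * (b ^ 2 * Real.sqrt T) := by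
    refine le_trans (Real.rpow_le_rpow hFsum0 hFbound (by positivity)) ?_
    have e1 : ((b:ℝ) ^ (2 * p')) ^ (1 / p') = b ^ 2 := by
      rw [← Real.rpow_mul hb0.le,
        show 2 * p' * (1 / p') = ((2:ℕ):ℝ) by push_cast; field_simp,
        Real.rpow_natCast]
    have e2 : (T ^ (p' / 2)) ^ (1 / p') = Real.sqrt T := by
      rw [← Real.rpow_mul hT0,
        show p' / 2 * (1 / p') = 1 / 2 by field_simp,
        ← Real.sqrt_eq_rpow]
    rw [Real.mul_rpow (by positivity) (Real.rpow_nonneg hT0 _),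
      Real.mul_rpow (by positivity) (Real.rpow_nonneg hb0.le _), e1, e2]
    ring_nf
    exact le_refl _
  have hmain : T ≤ (b ^ 2 * ((2:ℝ) ^ (2 * n)) ^ (1 / p') * Ap) * Real.sqrt T := by
    calc T ≤ Ap * (∑ x : Fin n → ℤˣ, ∑ z : Fin n → ℤˣ, |F x z| ^ p') ^ (1 / p') := hHold
      _ ≤ Ap * (((2:ℝ) ^ (2 * n)) ^ (1 / p') * (b ^ 2 * Real.sqrt T)) :=
          mul_le_mul_of_nonneg_left hFp' hAp0
      _ = (b ^ 2 * ((2:ℝ) ^ (2 * n)) ^ (1 / p') * Ap) * Real.sqrt T := by ring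
  have hgoal : Real.sqrt T ≤ b ^ 2 * ((2:ℝ) ^ (2 * n)) ^ (1 / p') * Ap := by
    rcases eq_or_lt_of_le hT0 with hT | hT
    · rw [← hT, Real.sqrt_zero]
      exact mul_nonneg (mul_nonneg (by positivity) (by positivity)) hAp0
    · have hs : 0 < Real.sqrt T := Real.sqrt_pos.2 hT
      have h2 : Real.sqrt T * Real.sqrt T ≤
          (b ^ 2 * ((2:ℝ) ^ (2 * n)) ^ (1 / p') * Ap) * Real.sqrt T := by
        rw [Real.mul_self_sqrt hT0]
        exact hmain
      exact le_of_mul_le_mul_right h2 hs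
  exact hgoal
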